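/- Let f(t) = tan(π/4 + at) with |a| < π/4, let F(t) = diag(f(t), 1/f(t)), and let U(t) be the rotation matrix by angle 2πt. Then the path X(t) = U(t)F(t)U(t) in Sp(2,ℝ) is generated by a pointwise positive-definite Hamiltonian; i.e., the symmetric matrix H_X(t) defined by Ẋ X⁻¹ = J H_X is positive definite for all t. -/

import Mathlib

open Real Matrix

set_option maxHeartbeats 2000000 in
theorem key_pos (c s g gi a p h00 h01 h11 : ℝ)
    (hcs : c^2 + s^2 = 1) (hggi : g * gi = 1) (hg : 0 < g)
    (ha1 : -(p/4) < a) (ha2 : a < p/4) (hp : 3 < p)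
    (E00 : -(h01*(c^2*g - s^2*gi)) - h11*(c*s*(g+gi))
        = -(4*p*c*s*g) + a*(1+g^2)*c^2 - 4*p*c*s*gi + a*(1+g^2)*gi^2*s^2)
    (E01 : -(h01*(-(c*s*(g+gi)))) - h11*(c^2*gi - s^2*g)
        = -(2*p*(c^2-s^2)*(g+gi)) - a*(1+g^2)*c*s*(1-gi^2))
    (E10 : h00*(c^2*g - s^2*gi) + h01*(c*s*(g+gi))
        = 2*p*(c^2-s^2)*(g+gi) + a*(1+g^2)*c*s*(1-gi^2))
    (E11 : h00*(-(c*s*(g+gi))) + h01*(c^2*gi - s^2*g)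
        = -(4*p*c*s*gi) - a*(1+g^2)*gi^2*c^2 - 4*p*c*s*g - a*(1+g^2)*s^2) :
    0 < h00 ∧ 0 < h11 ∧ 0 < h00*h11 - h01^2 := by
  have hgi : 0 < gi := by nlinarith
  have F00 : h00 = 2*p + 2*p*(c^2*gi^2 + s^2*g^2) + 2*a*(g+gi)*c*s := by
    linear_combination (c^2*gi - s^2*g) * E10 - (c*s*(g+gi)) * E11
      + ((-1)*h00 + (2)*p + (-1)*s^2*h00 + (2)*s^2*p + (2)*s^2*g^2*p + (2)*c*s*gi*a + (2)*c*s*g*a + (-1)*c^2*h00 + (2)*c^2*p + (2)*c^2*gi^2*p) * hcs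
      + ((-1)*s^4*h00 + (2)*s^4*p + (1)*c*s^3*gi*a + (2)*c*s^3*g*a + (1)*c*s^3*g^2*gi*a + (-2)*c^2*s^2*h00 + (4)*c^2*s^2*p + (1)*c^3*s*gi*a + (2)*c^3*s*g*a + (1)*c^3*s*g^2*gi*a + (-1)*c^4*h00 + (2)*c^4*p) * hggi
  have F11 : h11 = 2*p + 2*p*(s^2*gi^2 + c^2*g^2) - 2*a*(g+gi)*c*s := by
    linear_combination (-(c*s*(g+gi))) * E00 - (c^2*g - s^2*gi) * E01
      + ((-1)*h11 + (2)*p + (-1)*s^2*h11 + (2)*s^2*p + (2)*s^2*gi^2*p + (-2)*c*s*gi*a + (-2)*c*s*g*a + (-1)*c^2*h11 + (2)*c^2*p + (2)*c^2*g^2*p) * hcs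
      + ((-1)*s^4*h11 + (2)*s^4*p + (-1)*c*s^3*gi*a + (-2)*c*s^3*g*a + (-1)*c*s^3*g^2*gi*a + (-2)*c^2*s^2*h11 + (4)*c^2*s^2*p + (-1)*c^3*s*gi*a + (-2)*c^3*s*g*a + (-1)*c^3*s*g^2*gi*a + (-1)*c^4*h11 + (2)*c^4*p) * hggi
  have F01 : h01 = 2*p*c*s*(gi^2 - g^2) - a*(g+gi)*(c^2 - s^2) := by
    linear_combination (c*s*(g+gi)) * E10 + (c^2*g - s^2*gi) * E11
      + ((-1)*h01 + (-1)*s^2*h01 + (1)*s^2*gi*a + (1)*s^2*g*a + (2)*c*s*gi^2*p + (-2)*c*s*g^2*p + (-1)*c^2*h01 + (-1)*c^2*gi*a + (-1)*c^2*g*a) * hcs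
      + ((-1)*s^4*h01 + (1)*s^4*g*a + (-2)*c^2*s^2*h01 + (-1)*c^2*s^2*gi*a + (-1)*c^2*s^2*g^2*gi*a + (-1)*c^4*h01 + (-1)*c^4*gi*a + (-1)*c^4*g*a + (-1)*c^4*g^2*gi*a) * hggi
  have hT : (0:ℝ) ≤ c^2*gi^2 + s^2*g^2 := by positivity
  have hT' : (0:ℝ) ≤ s^2*gi^2 + c^2*g^2 := by positivity
  have k1 : (0:ℝ) ≤ (p/4+a)*((c+s*g)^2 + (c*gi+s)^2) := by
    apply mul_nonneg (by linarith) (by positivity)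
  have k2 : (0:ℝ) ≤ (p/4-a)*((c-s*g)^2 + (c*gi-s)^2) := by
    apply mul_nonneg (by linarith) (by positivity)
  have k1' : (0:ℝ) ≤ (p/4-a)*((c*g+s)^2 + (c+s*gi)^2) := by
    apply mul_nonneg (by linarith) (by positivity)
  have k2' : (0:ℝ) ≤ (p/4+a)*((c*g-s)^2 + (c-s*gi)^2) := by
    apply mul_nonneg (by linarith) (by positivity)
  have hpT : (0:ℝ) ≤ p * (c^2*gi^2 + s^2*g^2) := mul_nonneg (by linarith) hT
  have hpT' : (0:ℝ) ≤ p * (s^2*gi^2 + c^2*g^2) := mul_nonneg (by linarith) hT'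
  have h00pos : 0 < h00 := by nlinarith [k1, k2, hpT, hcs]
  have h11pos : 0 < h11 := by nlinarith [k1', k2', hpT', hcs]
  refine ⟨h00pos, h11pos, ?_⟩
  have hdeteq : h00*h11 - h01^2 = (g+gi)^2 * (4*p^2 - a^2) := by
    rw [F00, F11, F01]
    linear_combination ((4)*p^2 + (-2)*a^2 + (4)*gi^2*p^2 + (-1)*gi^2*a^2 + (4)*g^2*p^2 + (-1)*g^2*a^2 + (4)*s^2*p^2 + (-2)*s^2*a^2 + (-1)*s^2*gi^2*a^2 + (-1)*s^2*g^2*a^2 + (4)*c^2*p^2 + (-2)*c^2*a^2 + (-1)*c^2*gi^2*a^2 + (-1)*c^2*g^2*a^2) * hcs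
      + ((-8)*p^2 + (2)*a^2 + (4)*s^4*p^2 + (-2)*s^4*a^2 + (4)*s^4*g*gi*p^2 + (8)*c^2*s^2*p^2 + (-4)*c^2*s^2*a^2 + (8)*c^2*s^2*g*gi*p^2 + (4)*c^4*p^2 + (-2)*c^4*a^2 + (4)*c^4*g*gi*p^2) * hggi
  rw [hdeteq]
  have ha2' : a^2 < (p/4)^2 := sq_lt_sq' ha1 ha2
  have hgpgi : 0 < g + gi := by linarith
  nlinarith [sq_nonneg (g+gi), hgpgi]

set_option maxHeartbeats 2000000 in
/-- With `f(t) = tan(π/4 + at)`, `|a| < π/4`, `F(t) = diag(f(t), 1/f(t))`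
and `U(t)` rotation by `2πt`, the path `X(t) = U(t) F(t) U(t)` in `Sp(2,ℝ)` is
generated by a pointwise positive-definite Hamiltonian: any symmetric-matrix-valued
`H` satisfying `Ẋ X⁻¹ = J H` (i.e. `Ẋ = J H X`) is positive definite for all
`t ∈ [0,1]`. -/
theorem positive_path_to_diagonal (a : ℝ) (ha : |a| < π / 4)
    (f : ℝ → ℝ) (hf : ∀ t, f t = Real.tan (π / 4 + a * t))
    (F U X : ℝ → Matrix (Fin 2) (Fin 2) ℝ)
    (hF : ∀ t, F t = !![f t, 0; 0, (f t)⁻¹])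
    (hU : ∀ t, U t = !![Real.cos (2 * π * t), -Real.sin (2 * π * t);
                        Real.sin (2 * π * t), Real.cos (2 * π * t)])
    (hX : ∀ t, X t = U t * F t * U t)
    (J : Matrix (Fin 2) (Fin 2) ℝ) (hJ : J = !![0, -1; 1, 0])
    (H : ℝ → Matrix (Fin 2) (Fin 2) ℝ)
    (hHsymm : ∀ t ∈ Set.Icc (0 : ℝ) 1, (H t).IsSymm)
    (hder : ∀ t ∈ Set.Icc (0 : ℝ) 1, ∀ i j,
      HasDerivAt (fun s => X s i j) ((J * H t * X t) i j) t) :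
    ∀ t ∈ Set.Icc (0 : ℝ) 1, (H t).PosDef := by
  intro t ht
  have ht0 := ht.1
  have ht1 := ht.2
  have hpi := Real.pi_gt_three
  have habs := abs_lt.mp ha
  have hat : |a * t| < π / 4 := by
    rw [abs_mul]
    calc |a| * |t| ≤ |a| * 1 := by
          apply mul_le_mul_of_nonneg_left _ (abs_nonneg a)
          rw [abs_le]; constructor <;> linarith
      _ = |a| := mul_one _
      _ < π / 4 := ha
  have hat' := abs_lt.mp hat
  have hφ0 : 0 < π / 4 + a * t := by linarith
  have hφ1 : π / 4 + a * t < π / 2 := by linarith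
  have hcosφ : 0 < Real.cos (π / 4 + a * t) :=
    Real.cos_pos_of_mem_Ioo ⟨by linarith, hφ1⟩
  have hg : 0 < f t := by
    rw [hf]; exact Real.tan_pos_of_pos_of_lt_pi_div_two hφ0 hφ1
  have hgne : f t ≠ 0 := hg.ne'
  -- derivative of f
  have hlin : HasDerivAt (fun u : ℝ => π / 4 + a * u) a t := by
    simpa using ((hasDerivAt_id t).const_mul a).const_add (π / 4)
  have hd : HasDerivAt f (a * (1 + (f t)^2)) t := by
    have h1 : HasDerivAt (fun u => Real.tan (π / 4 + a * u))
        (1 / Real.cos (π / 4 + a * t) ^ 2 * a) t :=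
      by have := (Real.hasDerivAt_tan hcosφ.ne').comp t hlin; exact this
    have h2 : (fun u => Real.tan (π / 4 + a * u)) = f := funext fun u => (hf u).symm
    rw [h2] at h1
    have h3 : 1 / Real.cos (π / 4 + a * t) ^ 2 = 1 + Real.tan (π / 4 + a * t) ^ 2 := by
      rw [← Real.inv_one_add_tan_sq hcosφ.ne', one_div, inv_inv]
    rw [h3, ← hf t] at h1
    convert h1 using 1
    ring
  have hgi' : HasDerivAt (fun u => (f u)⁻¹) (-(a * (1 + (f t)^2)) * ((f t)⁻¹)^2) t := by
    have h1 := hd.inv hgne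
    refine h1.congr_deriv ?_
    ring
  have h2pi : HasDerivAt (fun u : ℝ => 2 * π * u) (2 * π) t := by
    simpa using (hasDerivAt_id t).const_mul (2 * π)
  have hC : HasDerivAt (fun u => Real.cos (2 * π * u)) (-Real.sin (2 * π * t) * (2 * π)) t :=
    h2pi.cos
  have hS : HasDerivAt (fun u => Real.sin (2 * π * u)) (Real.cos (2 * π * t) * (2 * π)) t :=
    h2pi.sin
  -- entry formulas
  have hE00 : ∀ u, X u 0 0 = Real.cos (2*π*u) * Real.cos (2*π*u) * f u
      - Real.sin (2*π*u) * Real.sin (2*π*u) * (f u)⁻¹ := by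
    intro u; rw [hX u, hU u, hF u]
    simp [Matrix.mul_apply, Fin.sum_univ_two]; ring
  have hE01 : ∀ u, X u 0 1 = -(Real.cos (2*π*u) * Real.sin (2*π*u) * f u)
      - Real.cos (2*π*u) * Real.sin (2*π*u) * (f u)⁻¹ := by
    intro u; rw [hX u, hU u, hF u]
    simp [Matrix.mul_apply, Fin.sum_univ_two]; ring
  have hE10 : ∀ u, X u 1 0 = Real.cos (2*π*u) * Real.sin (2*π*u) * f u
      + Real.cos (2*π*u) * Real.sin (2*π*u) * (f u)⁻¹ := by
    intro u; rw [hX u, hU u, hF u]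
    simp [Matrix.mul_apply, Fin.sum_univ_two]; ring
  have hE11 : ∀ u, X u 1 1 = Real.cos (2*π*u) * Real.cos (2*π*u) * (f u)⁻¹
      - Real.sin (2*π*u) * Real.sin (2*π*u) * f u := by
    intro u; rw [hX u, hU u, hF u]
    simp [Matrix.mul_apply, Fin.sum_univ_two]; ring
  -- abbreviations (as plain terms)
  -- derivatives of entries
  have hD00 : HasDerivAt (fun u => X u 0 0)
      (-(4*π*Real.cos (2*π*t)*Real.sin (2*π*t)*(f t)) + a*(1+(f t)^2)*(Real.cos (2*π*t))^2
       - 4*π*Real.cos (2*π*t)*Real.sin (2*π*t)*((f t)⁻¹)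
       + a*(1+(f t)^2)*((f t)⁻¹)^2*(Real.sin (2*π*t))^2) t := by
    have h1 := ((hC.mul hC).mul hd).sub ((hS.mul hS).mul hgi')
    simp only [hE00]
    refine h1.congr_deriv ?_
    simp only [Pi.mul_apply]; ring
  have hD01 : HasDerivAt (fun u => X u 0 1)
      (-(2*π*((Real.cos (2*π*t))^2-(Real.sin (2*π*t))^2)*((f t)+(f t)⁻¹))
       - a*(1+(f t)^2)*Real.cos (2*π*t)*Real.sin (2*π*t)*(1-((f t)⁻¹)^2)) t := by
    have h1 := (((hC.mul hS).mul hd).neg).sub ((hC.mul hS).mul hgi')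
    simp only [hE01]
    refine h1.congr_deriv ?_
    simp only [Pi.mul_apply]; ring
  have hD10 : HasDerivAt (fun u => X u 1 0)
      (2*π*((Real.cos (2*π*t))^2-(Real.sin (2*π*t))^2)*((f t)+(f t)⁻¹)
       + a*(1+(f t)^2)*Real.cos (2*π*t)*Real.sin (2*π*t)*(1-((f t)⁻¹)^2)) t := by
    have h1 := ((hC.mul hS).mul hd).add ((hC.mul hS).mul hgi')
    simp only [hE10]
    refine h1.congr_deriv ?_
    simp only [Pi.mul_apply]; ring
  have hD11 : HasDerivAt (fun u => X u 1 1)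
      (-(4*π*Real.cos (2*π*t)*Real.sin (2*π*t)*((f t)⁻¹))
       - a*(1+(f t)^2)*((f t)⁻¹)^2*(Real.cos (2*π*t))^2
       - 4*π*Real.cos (2*π*t)*Real.sin (2*π*t)*(f t)
       - a*(1+(f t)^2)*(Real.sin (2*π*t))^2) t := by
    have h1 := ((hC.mul hC).mul hgi').sub ((hS.mul hS).mul hd)
    simp only [hE11]
    refine h1.congr_deriv ?_
    simp only [Pi.mul_apply]; ring
  -- uniqueness of derivatives
  have u00 := (hder t ht 0 0).unique hD00
  have u01 := (hder t ht 0 1).unique hD01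
  have u10 := (hder t ht 1 0).unique hD10
  have u11 := (hder t ht 1 1).unique hD11
  -- expand the J*H*X entries
  have hsym : H t 1 0 = H t 0 1 := (hHsymm t ht).apply 0 1
  have L00 : (J * H t * X t) 0 0 = -(H t 0 1 * X t 0 0) - H t 1 1 * X t 1 0 := by
    rw [hJ, ← hsym]; simp [Matrix.mul_apply, Matrix.vecMul, dotProduct, Fin.sum_univ_two]; ring
  have L01 : (J * H t * X t) 0 1 = -(H t 0 1 * X t 0 1) - H t 1 1 * X t 1 1 := by
    rw [hJ, ← hsym]; simp [Matrix.mul_apply, Matrix.vecMul, dotProduct, Fin.sum_univ_two]; ring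
  have L10 : (J * H t * X t) 1 0 = H t 0 0 * X t 0 0 + H t 0 1 * X t 1 0 := by
    rw [hJ]; simp [Matrix.mul_apply, Matrix.vecMul, dotProduct, Fin.sum_univ_two]
  have L11 : (J * H t * X t) 1 1 = H t 0 0 * X t 0 1 + H t 0 1 * X t 1 1 := by
    rw [hJ]; simp [Matrix.mul_apply, Matrix.vecMul, dotProduct, Fin.sum_univ_two]
  rw [L00, hE00 t, hE10 t] at u00
  rw [L01, hE01 t, hE11 t] at u01
  rw [L10, hE00 t, hE10 t] at u10
  rw [L11, hE01 t, hE11 t] at u11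
  -- apply key lemma
  have hcs : (Real.cos (2*π*t))^2 + (Real.sin (2*π*t))^2 = 1 := Real.cos_sq_add_sin_sq _
  have hggi : f t * (f t)⁻¹ = 1 := mul_inv_cancel₀ hgne
  obtain ⟨P00, P11, Pdet⟩ := key_pos (Real.cos (2*π*t)) (Real.sin (2*π*t)) (f t) ((f t)⁻¹)
      a π (H t 0 0) (H t 0 1) (H t 1 1) hcs hggi hg (by linarith [habs.1]) habs.2 hpi
      (by linear_combination u00) (by linear_combination u01)
      (by linear_combination u10) (by linear_combination u11)
  rw [Matrix.posDef_iff_dotProduct_mulVec]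
  constructor
  · rw [Matrix.IsHermitian, Matrix.conjTranspose_eq_transpose_of_trivial]
    exact hHsymm t ht
  · intro x hx
    have hq : dotProduct (star x) (H t *ᵥ x)
        = x 0 * (H t 0 0 * x 0 + H t 0 1 * x 1) + x 1 * (H t 1 0 * x 0 + H t 1 1 * x 1) := by
      simp [dotProduct, Matrix.mulVec, Fin.sum_univ_two]
    rw [hq, hsym]
    by_cases h1 : x 1 = 0
    · have h0 : x 0 ≠ 0 := by
        intro h0; apply hx; ext i; fin_cases i <;> simp [h0, h1]
      have hx0 : 0 < x 0 ^ 2 := lt_of_le_of_ne (sq_nonneg _) (Ne.symm (pow_ne_zero 2 h0))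
      rw [h1]; nlinarith [mul_pos P00 hx0]
    · have hx1 : 0 < x 1 ^ 2 := lt_of_le_of_ne (sq_nonneg _) (Ne.symm (pow_ne_zero 2 h1))
      nlinarith [P00, mul_pos Pdet hx1, sq_nonneg (H t 0 0 * x 0 + H t 0 1 * x 1)]
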